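/- Let M be a complete metric space which has the approximate midpoint property and satisfies: for every finite family of closed balls B(x₁,δ₁), …, B(xₙ,δₙ) in M which pairwise intersect and every ε > 0, the intersection ∩ᵢ B(xᵢ, δᵢ + ε) is nonempty. Then M has the finite binary intersection property: every finite family of pairwise intersecting closed balls in M has nonempty intersection. -/

import Mathlib

/-- Dyadic points along an approximate geodesic. -/
lemma dyadic_point {M : Type*} [MetricSpace M]
    (hmid : ∀ x y : M, ∀ ε : ℝ, 0 < ε →
      ∃ z : M, dist x z ≤ dist x y / 2 + ε ∧ dist y z ≤ dist x y / 2 + ε) :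
    ∀ (m k : ℕ), k ≤ 2 ^ m → ∀ (x z : M) (ε : ℝ), 0 < ε →
      ∃ w : M, dist x w ≤ ((k : ℝ) / 2 ^ m) * dist x z + ε ∧
               dist z w ≤ (1 - (k : ℝ) / 2 ^ m) * dist x z + ε := by
  intro m
  induction m with
  | zero =>
    intro k hk x z ε hε
    interval_cases k
    · refine ⟨x, ?_, ?_⟩
      · simp; positivity
      · rw [dist_comm]
        simp
        nlinarith [dist_nonneg (x := x) (y := z)]
    · refine ⟨z, ?_, ?_⟩
      · simp; nlinarith [dist_nonneg (x := x) (y := z)]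
      · simp; positivity
  | succ m ih =>
    intro k hk x z ε hε
    have hε' : (0:ℝ) < ε / 3 := by linarith
    obtain ⟨mp, hmp1, hmp2⟩ := hmid x z (ε / 3) hε'
    have hd : (0:ℝ) ≤ dist x z := dist_nonneg
    have h2m : (0:ℝ) < 2 ^ m := by positivity
    by_cases hkm : k ≤ 2 ^ m
    · obtain ⟨w, hw1, hw2⟩ := ih k hkm x mp (ε / 3) hε'
      have hA1 : ((k : ℝ) / 2 ^ m) ≤ 1 := by
        rw [div_le_one h2m]
        exact_mod_cast hkm
      have hA0 : (0:ℝ) ≤ (k : ℝ) / 2 ^ m := by positivity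
      have hcast : ((k : ℝ) / 2 ^ (m+1)) = ((k : ℝ) / 2 ^ m) / 2 := by
        rw [pow_succ]; ring
      refine ⟨w, ?_, ?_⟩
      · rw [hcast]
        have hd1 : (0:ℝ) ≤ dist x mp := dist_nonneg
        nlinarith [hw1, hmp1]
      · rw [hcast]
        have h3 : dist z w ≤ dist z mp + dist mp w := dist_triangle z mp w
        have h4 : dist mp w ≤ (1 - (k : ℝ) / 2 ^ m) * dist x mp + ε / 3 := hw2
        nlinarith [hmp1, hmp2]
    · push_neg at hkm
      have hkm' : 2 ^ m ≤ k := le_of_lt hkm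
      obtain ⟨w, hw1, hw2⟩ := ih (k - 2 ^ m) (by omega) mp z (ε / 3) hε'
      have hcast : ((↑(k - 2 ^ m) : ℝ)) = (k : ℝ) - 2 ^ m := by
        push_cast [Nat.cast_sub hkm']; ring
      set A : ℝ := ((↑(k - 2 ^ m) : ℝ)) / 2 ^ m with hAdef
      have hA0 : (0:ℝ) ≤ A := by positivity
      have hA1 : A ≤ 1 := by
        rw [hAdef, div_le_one h2m]
        have : k - 2 ^ m ≤ 2 ^ m := by omega
        exact_mod_cast this
      have hcast2 : ((k : ℝ) / 2 ^ (m+1)) = A / 2 + 1 / 2 := by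
        rw [hAdef, hcast, pow_succ]
        field_simp
        ring
      have hdm : dist mp z = dist z mp := dist_comm mp z
      refine ⟨w, ?_, ?_⟩
      · rw [hcast2]
        have h3 : dist x w ≤ dist x mp + dist mp w := dist_triangle x mp w
        have h4 : dist mp w ≤ A * dist mp z + ε / 3 := hw1
        nlinarith [hmp1, hmp2]
      · rw [hcast2]
        have h4 : dist z w ≤ (1 - A) * dist mp z + ε / 3 := hw2
        nlinarith [hmp2]

/-- Approach a ball: if `dist x z ≤ δ + η` then there is a point within `δ` of `x`
and within `2η` of `z`. -/
lemma approach_ball {M : Type*} [MetricSpace M]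
    (hmid : ∀ x y : M, ∀ ε : ℝ, 0 < ε →
      ∃ z : M, dist x z ≤ dist x y / 2 + ε ∧ dist y z ≤ dist x y / 2 + ε)
    (x z : M) (δ η : ℝ) (hδ : 0 ≤ δ) (hη : 0 < η) (hd : dist x z ≤ δ + η) :
    ∃ w : M, dist x w ≤ δ ∧ dist z w ≤ 2 * η := by
  by_cases h1 : dist x z ≤ δ
  · exact ⟨z, h1, by simp; linarith⟩
  push_neg at h1
  by_cases h2 : δ ≤ η
  · refine ⟨x, by simp [hδ], ?_⟩
    rw [dist_comm]
    linarith
  push_neg at h2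
  set d := dist x z with hddef
  have hd0 : (0:ℝ) < d := lt_of_le_of_lt hδ h1
  set hi : ℝ := (δ - η / 4) / d with hhidef
  have hhi0 : 0 < hi := by
    apply div_pos _ hd0
    linarith
  have hhi1 : hi ≤ 1 := by
    rw [div_le_one hd0]
    linarith
  obtain ⟨m, hm⟩ := exists_pow_lt_of_lt_one (show (0:ℝ) < (η/4)/d by positivity)
    (show (1:ℝ)/2 < 1 by norm_num)
  set k : ℕ := ⌊hi * 2 ^ m⌋₊ with hkdef
  have h2m : (0:ℝ) < 2 ^ m := by positivity
  have hk1 : (k : ℝ) ≤ hi * 2 ^ m := Nat.floor_le (by positivity)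
  have hk2 : hi * 2 ^ m < (k : ℝ) + 1 := Nat.lt_floor_add_one _
  have hkle : k ≤ 2 ^ m := by
    have : (k : ℝ) ≤ 2 ^ m := le_trans hk1 (by nlinarith)
    exact_mod_cast this
  obtain ⟨w, hw1, hw2⟩ := dyadic_point hmid m k hkle x z (η / 4) (by linarith)
  have ht1 : ((k:ℝ)/2^m) * d ≤ δ - η/4 := by
    rw [div_mul_eq_mul_div, div_le_iff₀ h2m]
    calc (k:ℝ) * d ≤ (hi * 2 ^ m) * d := by nlinarith
    _ = (δ - η/4) * 2 ^ m := by rw [hhidef]; field_simp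
  have ht2 : hi - ((1:ℝ)/2)^m < (k:ℝ)/2^m := by
    have hinv : ((1:ℝ)/2)^m * 2^m = 1 := by
      rw [div_pow]; field_simp; simp
    rw [lt_div_iff₀ h2m]
    nlinarith [hk2]
  have ht3 : (1 - (k:ℝ)/2^m) * d ≤ 3 * η / 2 := by
    have h5 : hi * d = δ - η/4 := by rw [hhidef]; field_simp
    have h6 : ((1:ℝ)/2)^m * d < η/4 := by
      rw [← lt_div_iff₀ hd0]; exact hm
    have h7 := mul_lt_mul_of_pos_right ht2 hd0
    nlinarith [h7]
  refine ⟨w, ?_, ?_⟩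
  · linarith [hw1, ht1]
  · linarith [hw2, ht3]

theorem stmt9 {M : Type*} [MetricSpace M] [CompleteSpace M]
    (hmid : ∀ x y : M, ∀ ε : ℝ, 0 < ε →
      ∃ z : M, dist x z ≤ dist x y / 2 + ε ∧ dist y z ≤ dist x y / 2 + ε)
    (hballs : ∀ (n : ℕ) (x : Fin n → M) (δ : Fin n → ℝ),
      (∀ i j, (Metric.closedBall (x i) (δ i) ∩ Metric.closedBall (x j) (δ j)).Nonempty) →
      ∀ ε : ℝ, 0 < ε → (⋂ i, Metric.closedBall (x i) (δ i + ε)).Nonempty) :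
    ∀ (n : ℕ) (x : Fin n → M) (δ : Fin n → ℝ),
      (∀ i j, (Metric.closedBall (x i) (δ i) ∩ Metric.closedBall (x j) (δ j)).Nonempty) →
      (⋂ i, Metric.closedBall (x i) (δ i)).Nonempty := by
  intro n x δ hpair
  have hδ : ∀ i, 0 ≤ δ i := by
    intro i
    obtain ⟨w, hw, -⟩ := hpair i i
    exact dist_nonneg.trans hw
  set P : ℕ → M → Prop := fun k z => ∀ i, dist (x i) z ≤ δ i + (1/2:ℝ) ^ k with hPdef
  have h0 : ∃ z, P 0 z := by
    obtain ⟨z, hz⟩ := hballs n x δ hpair 1 one_pos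
    refine ⟨z, fun i => ?_⟩
    have := Set.mem_iInter.mp hz i
    rw [Metric.mem_closedBall] at this
    rw [dist_comm]
    simpa using this
  have step : ∀ k (z : M), P k z → ∃ z', P (k+1) z' ∧ dist z z' ≤ (5/2 : ℝ) * (1/2)^k := by
    intro k z hz
    set x' : Fin (n+1) → M := Fin.cons z x with hx'def
    set δ' : Fin (n+1) → ℝ := Fin.cons (2 * (1/2:ℝ)^k) δ with hδ'def
    have hpair' : ∀ i j, (Metric.closedBall (x' i) (δ' i) ∩
        Metric.closedBall (x' j) (δ' j)).Nonempty := by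
      have key : ∀ i : Fin n, (Metric.closedBall z (2 * (1/2:ℝ)^k) ∩
          Metric.closedBall (x i) (δ i)).Nonempty := by
        intro i
        obtain ⟨w, hw1, hw2⟩ := approach_ball hmid (x i) z (δ i) ((1/2:ℝ)^k)
          (hδ i) (by positivity) (hz i)
        exact ⟨w, by rwa [Metric.mem_closedBall, dist_comm],
               by rwa [Metric.mem_closedBall, dist_comm]⟩
      intro i j
      refine Fin.cases ?_ (fun i' => ?_) i
      · refine Fin.cases ?_ (fun j' => ?_) j
        · exact ⟨z, by simp [hx'def, hδ'def]⟩
        · simpa [hx'def, hδ'def] using key j'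
      · refine Fin.cases ?_ (fun j' => ?_) j
        · obtain ⟨w, hw1, hw2⟩ := key i'
          exact ⟨w, by simpa [hx'def, hδ'def] using hw2, by simpa [hx'def, hδ'def] using hw1⟩
        · simpa [hx'def, hδ'def] using hpair i' j'
    obtain ⟨z', hz'⟩ := hballs (n+1) x' δ' hpair' ((1/2:ℝ)^(k+1)) (by positivity)
    have h00 := Set.mem_iInter.mp hz' 0
    have hsucc : ∀ i : Fin n, dist (x i) z' ≤ δ i + (1/2:ℝ)^(k+1) := by
      intro i
      have := Set.mem_iInter.mp hz' i.succ
      rw [Metric.mem_closedBall] at this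
      rw [dist_comm]
      simpa [hx'def, hδ'def] using this
    refine ⟨z', hsucc, ?_⟩
    rw [Metric.mem_closedBall] at h00
    have h01 : dist z' z ≤ 2 * (1/2:ℝ)^k + (1/2:ℝ)^(k+1) := by
      simpa [hx'def, hδ'def] using h00
    rw [dist_comm]
    have : (2:ℝ) * (1/2)^k + (1/2)^(k+1) = (5/2) * (1/2)^k := by
      rw [pow_succ]; ring
    linarith [h01, this.le]
  choose F hF1 hF2 using step
  obtain ⟨z0, hz0⟩ := h0
  let u : ∀ k : ℕ, {zz : M // P k zz} := fun k =>
    Nat.rec ⟨z0, hz0⟩ (fun k p => ⟨F k p.1 p.2, hF1 k p.1 p.2⟩) k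
  have hdist : ∀ k, dist ((u k).1) ((u (k+1)).1) ≤ (5/2 : ℝ) * (1/2)^k :=
    fun k => hF2 k (u k).1 (u k).2
  have hcau : CauchySeq (fun k => (u k).1) :=
    cauchySeq_of_le_geometric (1/2) (5/2) (by norm_num) hdist
  obtain ⟨z, hz⟩ := cauchySeq_tendsto_of_complete hcau
  refine ⟨z, Set.mem_iInter.mpr fun i => ?_⟩
  rw [Metric.mem_closedBall, dist_comm]
  have hk : Filter.Tendsto (fun k => dist (x i) ((u k).1)) Filter.atTop
      (nhds (dist (x i) z)) := (Filter.Tendsto.dist tendsto_const_nhds hz)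
  have hlim : Filter.Tendsto (fun k : ℕ => δ i + (1/2:ℝ)^k) Filter.atTop (nhds (δ i)) := by
    have : Filter.Tendsto (fun k : ℕ => ((1:ℝ)/2)^k) Filter.atTop (nhds 0) :=
      tendsto_pow_atTop_nhds_zero_of_lt_one (by norm_num) (by norm_num)
    simpa using (tendsto_const_nhds.add this)
  have := le_of_tendsto_of_tendsto' hk hlim (fun k => (u k).2 i)
  simpa using this
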